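/- (Construction of an ensemble from a symmetry operator.) Let ρ be a density matrix on ℂ^d, let ρ_1,…,ρ_N and σ_1,…,σ_N be density matrices, and let p_1,…,p_N ∈ (0,1] with ρ = p_x ρ_x + (1 − p_x) σ_x for every x. Suppose there exists an N-outcome POVM (M_x)_{x=1}^N with (1 − p_x) tr(M_x σ_x) = 0 for every x. Then, with priors q_x = p_x / Σ_y p_y, the POVM (M_x) is optimal and the guessing probability for the ensemble {q_x, ρ_x} equals exactly 1/(Σ_x p_x): for every N-outcome POVM (N_x), Σ_x q_x tr(N_x ρ_x) ≤ Σ_x q_x tr(M_x ρ_x) = 1/(Σ_x p_x). -/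

import Mathlib

open BigOperators Matrix
open scoped ComplexOrder

/-- A density matrix: positive semidefinite with trace 1. -/
def IsDensityMatrix {d : ℕ} (ρ : Matrix (Fin d) (Fin d) ℂ) : Prop :=
  ρ.PosSemidef ∧ ρ.trace = 1

/-- An N-outcome POVM: positive semidefinite elements summing to the identity. -/
def IsPOVM {d N : ℕ} (M : Fin N → Matrix (Fin d) (Fin d) ℂ) : Prop :=
  (∀ x, (M x).PosSemidef) ∧ ∑ x, M x = 1


lemma my_diag_nonneg {d : ℕ} {A : Matrix (Fin d) (Fin d) ℂ} (hA : A.PosSemidef) (i : Fin d) :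
    0 ≤ A i i := by
  exact hA.diag_nonneg

lemma my_trace_nonneg {d : ℕ} {A : Matrix (Fin d) (Fin d) ℂ} (hA : A.PosSemidef) :
    0 ≤ A.trace :=
  Finset.sum_nonneg fun i _ => my_diag_nonneg hA i

open scoped MatrixOrder in
lemma my_trace_mul_nonneg {d : ℕ} {A B : Matrix (Fin d) (Fin d) ℂ}
    (hA : A.PosSemidef) (hB : B.PosSemidef) : 0 ≤ (A * B).trace := by
  have h1 : (CFC.sqrt A * B * CFC.sqrt A).PosSemidef := by
    have := hB.mul_mul_conjTranspose_same (CFC.sqrt A)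
    rwa [(CFC.sqrt_nonneg A).posSemidef.isHermitian.eq] at this
  have h2 : (A * B).trace = (CFC.sqrt A * B * CFC.sqrt A).trace := by
    rw [trace_mul_cycle, ← pow_two, CFC.sq_sqrt A hA.nonneg]
  rw [h2]
  exact my_trace_nonneg h1

lemma my_trace_mul_re_nonneg {d : ℕ} {A B : Matrix (Fin d) (Fin d) ℂ}
    (hA : A.PosSemidef) (hB : B.PosSemidef) : 0 ≤ ((A * B).trace).re := by
  have := my_trace_mul_nonneg hA hB
  simpa using (Complex.le_def.mp this).1

/-- construction of an ensemble from a symmetry operator: if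
`ρ = p_x ρ_x + (1 − p_x) σ_x` with `p_x ∈ (0,1]` and there is a POVM `(M_x)` with
`(1 − p_x) tr(M_x σ_x) = 0` for all `x`, then with priors `q_x = p_x / Σ_y p_y` the
POVM `(M_x)` is optimal and the guessing probability equals `1 / Σ_x p_x`. -/
theorem ensemble_from_symmetry_operator
    (d N : ℕ) (ρ : Matrix (Fin d) (Fin d) ℂ) (hρ : IsDensityMatrix ρ)
    (ρs σs : Fin N → Matrix (Fin d) (Fin d) ℂ)
    (hρs : ∀ x, IsDensityMatrix (ρs x)) (hσs : ∀ x, IsDensityMatrix (σs x))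
    (p : Fin N → ℝ) (hp0 : ∀ x, 0 < p x) (hp1 : ∀ x, p x ≤ 1)
    (hdec : ∀ x, ρ = (p x : ℂ) • ρs x + ((1 - p x : ℝ) : ℂ) • σs x)
    (M : Fin N → Matrix (Fin d) (Fin d) ℂ) (hM : IsPOVM M)
    (horth : ∀ x, (1 - p x) * ((M x * σs x).trace).re = 0) :
    (∀ Nx : Fin N → Matrix (Fin d) (Fin d) ℂ, IsPOVM Nx →
      ∑ x, (p x / ∑ y, p y) * ((Nx x * ρs x).trace).re ≤
        ∑ x, (p x / ∑ y, p y) * ((M x * ρs x).trace).re) ∧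
    ∑ x, (p x / ∑ y, p y) * ((M x * ρs x).trace).re = 1 / ∑ x, p x :=  by
  by_cases hN : N = 0
  · subst hN; simp
  have hNe : Nonempty (Fin N) := Fin.pos_iff_nonempty.mp (Nat.pos_of_ne_zero hN)
  set S : ℝ := ∑ y, p y with hS
  have hSpos : 0 < S := Finset.sum_pos (fun x _ => hp0 x) Finset.univ_nonempty
  have key : ∀ (Nx : Fin N → Matrix (Fin d) (Fin d) ℂ), IsPOVM Nx →
      ∑ x, p x * ((Nx x * ρs x).trace).re
        = 1 - ∑ x, (1 - p x) * ((Nx x * σs x).trace).re := by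
    intro Nx hNx
    have h1 : ∀ x, ((Nx x * ρ).trace).re
        = p x * ((Nx x * ρs x).trace).re + (1 - p x) * ((Nx x * σs x).trace).re := by
      intro x
      rw [hdec x, Matrix.mul_add, Matrix.mul_smul, Matrix.mul_smul, trace_add, trace_smul,
        trace_smul]
      simp [Complex.add_re, Complex.re_ofReal_mul, Complex.smul_re]
    have h2 : ∑ x, ((Nx x * ρ).trace).re = 1 := by
      have hsum : ∑ x, (Nx x * ρ).trace = 1 := by
        rw [← trace_sum, ← Finset.sum_mul, hNx.2, Matrix.one_mul, hρ.2]
      calc ∑ x, ((Nx x * ρ).trace).re = (∑ x, (Nx x * ρ).trace).re := by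
            rw [Complex.re_sum]
        _ = 1 := by rw [hsum]; simp
    calc ∑ x, p x * ((Nx x * ρs x).trace).re
        = ∑ x, (((Nx x * ρ).trace).re - (1 - p x) * ((Nx x * σs x).trace).re) := by
          refine Finset.sum_congr rfl fun x _ => ?_
          rw [h1 x]; ring
      _ = 1 - ∑ x, (1 - p x) * ((Nx x * σs x).trace).re := by
          rw [Finset.sum_sub_distrib, h2]
  have hMeq : ∑ x, p x * ((M x * ρs x).trace).re = 1 := by
    rw [key M hM, Finset.sum_eq_zero (fun x _ => horth x), sub_zero]
  have hdiv : ∀ t : Fin N → ℝ, ∑ x, (p x / S) * t x = (∑ x, p x * t x) / S := by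
    intro t
    rw [Finset.sum_div]
    refine Finset.sum_congr rfl fun x _ => ?_
    ring
  constructor
  · intro Nx hNx
    rw [hdiv, hdiv, hMeq]
    have hle : ∑ x, p x * ((Nx x * ρs x).trace).re ≤ 1 := by
      rw [key Nx hNx]
      have : 0 ≤ ∑ x, (1 - p x) * ((Nx x * σs x).trace).re :=
        Finset.sum_nonneg fun x _ => mul_nonneg (by linarith [hp1 x])
          (my_trace_mul_re_nonneg (hNx.1 x) (hσs x).1)
      linarith
    exact div_le_div_of_nonneg_right hle hSpos.le
  · rw [hdiv, hMeq]
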